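/- For r ≥ 2 and each fixed j, the operators Mᵢ = (1/(r−1))·P_{ij}⁺ for i ≠ j, and M_j = I − (1/(r−1))·∑_{i≠j} P_{ij}⁺, where P_{ij}⁺ is the spectral projection of qᵢρᵢ − q_jρ_j onto its strictly positive eigenvalues, form a valid POVM: each Mᵢ ≥ 0 and ∑ᵢ Mᵢ = I. -/

import Mathlib

open scoped ComplexOrder

/-- The operator absolute value `√(AᴴA)` of a matrix. -/
noncomputable def matAbs {n : ℕ} (A : Matrix (Fin n) (Fin n) ℂ) : Matrix (Fin n) (Fin n) ℂ :=
  ((Matrix.posSemidef_conjTranspose_mul_self A).1.eigenvectorUnitary : Matrix (Fin n) (Fin n) ℂ)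
    * Matrix.diagonal (fun i => ((Real.sqrt ((Matrix.posSemidef_conjTranspose_mul_self A).1.eigenvalues i) : ℝ) : ℂ))
    * (star (Matrix.posSemidef_conjTranspose_mul_self A).1.eigenvectorUnitary : Matrix (Fin n) (Fin n) ℂ)

/-- The trace norm `‖A‖₁ = tr √(AᴴA)`. -/
noncomputable def traceNorm {n : ℕ} (A : Matrix (Fin n) (Fin n) ℂ) : ℝ :=
  ((matAbs A).trace).re

/-- The positive part `A⁺ = (|A| + A)/2` of a self-adjoint matrix `A`, so that
`A = A⁺ - A⁻` with `A⁺, A⁻ ≥ 0`. -/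
noncomputable def matPosPart {n : ℕ} (A : Matrix (Fin n) (Fin n) ℂ) : Matrix (Fin n) (Fin n) ℂ :=
  (2 : ℂ)⁻¹ • (matAbs A + A)

/-- A density operator: positive semidefinite with unit trace. -/
def IsDensity {n : ℕ} (ρ : Matrix (Fin n) (Fin n) ℂ) : Prop :=
  ρ.PosSemidef ∧ ρ.trace = 1

/-- A POVM with `r` outcomes: positive semidefinite effects summing to the identity. -/
def IsPOVM {n r : ℕ} (M : Fin r → Matrix (Fin n) (Fin n) ℂ) : Prop :=
  (∀ i, (M i).PosSemidef) ∧ ∑ i, M i = 1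

/-- Success probability `∑ i, q i * tr (ρ i * M i)` of a measurement. -/
noncomputable def successProb {n r : ℕ} (q : Fin r → ℝ)
    (ρ M : Fin r → Matrix (Fin n) (Fin n) ℂ) : ℝ :=
  ∑ i, q i * ((ρ i * M i).trace).re

/-- Optimal success probability under minimum-error discrimination. -/
noncomputable def optSuccess {n r : ℕ} (q : Fin r → ℝ)
    (ρ : Fin r → Matrix (Fin n) (Fin n) ℂ) : ℝ :=
  sSup {p | ∃ M, IsPOVM M ∧ p = successProb q ρ M}

/-- The spectral projection of a Hermitian matrix onto the span of its eigenvectors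
with strictly positive eigenvalues. -/
noncomputable def posEigProj {n : ℕ} {A : Matrix (Fin n) (Fin n) ℂ} (hA : A.IsHermitian) :
    Matrix (Fin n) (Fin n) ℂ :=
  (hA.eigenvectorUnitary : Matrix (Fin n) (Fin n) ℂ)
    * Matrix.diagonal (fun i => if 0 < hA.eigenvalues i then (1 : ℂ) else 0)
    * (star hA.eigenvectorUnitary : Matrix (Fin n) (Fin n) ℂ)

lemma psd_smul {n : ℕ} {M : Matrix (Fin n) (Fin n) ℂ} (hM : M.PosSemidef) {c : ℂ}
    (hc : 0 ≤ c) : (c • M).PosSemidef := by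
  constructor
  · have : star c = c := Complex.conj_eq_iff_im.mpr
      (by simpa using (Complex.nonneg_iff.mp hc).2.symm)
    unfold Matrix.IsHermitian
    rw [Matrix.conjTranspose_smul, this, hM.1.eq]
  · exact (hM.smul hc).2

lemma psd_add {n : ℕ} {M N : Matrix (Fin n) (Fin n) ℂ} (hM : M.PosSemidef)
    (hN : N.PosSemidef) : (M + N).PosSemidef := by
  refine ⟨hM.1.add hN.1, fun x => ?_⟩
  exact (hM.add hN).2 x

lemma psd_sum {n r : ℕ} (s : Finset (Fin r)) (f : Fin r → Matrix (Fin n) (Fin n) ℂ)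
    (hf : ∀ i ∈ s, (f i).PosSemidef) : (∑ i ∈ s, f i).PosSemidef :=
  Finset.sum_induction f _ (fun _ _ => psd_add) Matrix.PosSemidef.zero hf

lemma posEigProj_psd {n : ℕ} {A : Matrix (Fin n) (Fin n) ℂ} (hA : A.IsHermitian) :
    (posEigProj hA).PosSemidef := by
  rw [posEigProj, Matrix.star_eq_conjTranspose]
  exact (Matrix.posSemidef_diagonal_iff.mpr
    (by intro i; split <;> norm_num)).mul_mul_conjTranspose_same _

lemma one_sub_posEigProj_psd {n : ℕ} {A : Matrix (Fin n) (Fin n) ℂ} (hA : A.IsHermitian) :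
    ((1 : Matrix (Fin n) (Fin n) ℂ) - posEigProj hA).PosSemidef := by
  have hU : (hA.eigenvectorUnitary : Matrix (Fin n) (Fin n) ℂ)
      * (star hA.eigenvectorUnitary : Matrix (Fin n) (Fin n) ℂ) = 1 :=
    Matrix.mem_unitaryGroup_iff.mp hA.eigenvectorUnitary.2
  have h1 : Matrix.diagonal (fun i => if 0 < hA.eigenvalues i then (0:ℂ) else 1)
      = 1 - Matrix.diagonal (fun i => if 0 < hA.eigenvalues i then (1:ℂ) else 0) := by
    ext i k
    rcases eq_or_ne i k with h | h
    · subst h; simp [Matrix.one_apply]; split <;> simp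
    · simp [Matrix.diagonal_apply_ne _ h, Matrix.one_apply_ne h]
  have key : (1 : Matrix (Fin n) (Fin n) ℂ) - posEigProj hA
      = (hA.eigenvectorUnitary : Matrix (Fin n) (Fin n) ℂ)
        * Matrix.diagonal (fun i => if 0 < hA.eigenvalues i then (0:ℂ) else 1)
        * (star hA.eigenvectorUnitary : Matrix (Fin n) (Fin n) ℂ) := by
    rw [h1, Matrix.mul_sub, Matrix.sub_mul, Matrix.mul_one, hU, posEigProj]
  rw [key, Matrix.star_eq_conjTranspose]
  exact (Matrix.posSemidef_diagonal_iff.mpr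
    (by intro i; split <;> norm_num)).mul_mul_conjTranspose_same _

theorem stmt6 {n r : ℕ} (hr : 2 ≤ r) (ρ : Fin r → Matrix (Fin n) (Fin n) ℂ)
    (q : Fin r → ℝ) (hρ : ∀ i, IsDensity (ρ i)) (hq : ∀ i, 0 < q i)
    (hq1 : ∑ i, q i = 1) (j : Fin r)
    (hH : ∀ i, (((q i : ℂ) • ρ i - (q j : ℂ) • ρ j)).IsHermitian) :
    IsPOVM (fun i =>
      if i = j then
        1 - ((r : ℂ) - 1)⁻¹ • ∑ k ∈ Finset.univ.erase j, posEigProj (hH k)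
      else ((r : ℂ) - 1)⁻¹ • posEigProj (hH i)) := by
  have hr2 : (2:ℝ) ≤ (r:ℝ) := by exact_mod_cast hr
  have hne : (r:ℂ) - 1 ≠ 0 := sub_ne_zero.mpr (by norm_cast; omega)
  have h1 : ((r:ℂ) - 1) = (((r:ℝ) - 1 : ℝ) : ℂ) := by push_cast; ring
  have hc : (0:ℂ) ≤ ((r:ℂ) - 1)⁻¹ := by
    rw [h1, ← Complex.ofReal_inv]
    exact Complex.zero_le_real.mpr (inv_nonneg.mpr (by linarith))
  have hcard : ((Finset.univ.erase j).card : ℂ) = (r:ℂ) - 1 := by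
    rw [Finset.card_erase_of_mem (Finset.mem_univ j)]
    simp only [Finset.card_univ, Fintype.card_fin]
    have : 1 ≤ r := by omega
    push_cast [Nat.cast_sub this]
    ring
  set S : Matrix (Fin n) (Fin n) ℂ := ∑ k ∈ Finset.univ.erase j, posEigProj (hH k) with hS
  have key : (1 : Matrix (Fin n) (Fin n) ℂ) - ((r : ℂ) - 1)⁻¹ • S
      = ((r : ℂ) - 1)⁻¹ • ∑ k ∈ Finset.univ.erase j,
          ((1 : Matrix (Fin n) (Fin n) ℂ) - posEigProj (hH k)) := by
    rw [Finset.sum_sub_distrib, Finset.sum_const, smul_sub, hS]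
    congr 1
    rw [← Nat.cast_smul_eq_nsmul ℂ, smul_smul, hcard, inv_mul_cancel₀ hne, one_smul]
  constructor
  · intro i
    dsimp only
    split_ifs with h
    · subst h
      rw [key]
      exact psd_smul (psd_sum _ _ (fun k _ => one_sub_posEigProj_psd (hH k))) hc
    · exact psd_smul (posEigProj_psd (hH i)) hc
  · rw [← Finset.add_sum_erase _ _ (Finset.mem_univ j)]
    rw [Finset.sum_congr rfl (fun i hi => if_neg (Finset.ne_of_mem_erase hi))]
    simp only [if_true, ← Finset.smul_sum, ← hS]
    rw [sub_add_cancel]
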